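/- arXiv:1205.4441 — 3 statements merged into one kernel-verified Lean document; each statement's English description precedes it below -/
import Mathlib

section
/- Let Θ : Ω → Ψ be measurable, {P_θ}_{θ∈Ψ} a disintegration of P over P_Θ consistent with Θ. Suppose T is countably generated, I is a countable index set, {X_i}_{i∈I} are measurable maps Ω → Y, and {k_i}_{i∈I} are T-Z-Markov kernels. Then the following are equivalent: (i) for each i∈I and each B∈T, ω ↦ k_i(B,Θ(ω)) is a version of P(X_i⁻¹(B) | σ(Θ)); (ii) for P_Θ-almost all θ∈Ψ, for every i∈I the pushforward of P_θ under X_i equals k_i(·,θ). -/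
open MeasureTheory Set
open scoped ENNReal

lemma my_countable_generatePiSystem {α : Type*} {S : Set (Set α)} (hS : S.Countable) :
    (generatePiSystem S).Countable := by
  have h : generatePiSystem S ⊆
      (fun t => ⋂₀ t) '' {t : Set (Set α) | t.Finite ∧ t ⊆ S} := by
    intro s hs
    induction hs with
    | base h =>
      exact ⟨{_}, ⟨finite_singleton _, singleton_subset_iff.2 h⟩, sInter_singleton _⟩
    | inter hs ht hne ihs iht =>
      obtain ⟨a, ⟨haf, haS⟩, rfl⟩ := ihs
      obtain ⟨b, ⟨hbf, hbS⟩, rfl⟩ := iht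
      exact ⟨a ∪ b, ⟨haf.union hbf, union_subset haS hbS⟩, by simp [sInter_union]⟩
  exact (((countable_setOf_finite_subset hS).image _).mono h)

/-- With `T` countably generated and `I` countable, the kernels `k_i`
are versions of the conditional distributions of the `X_i` given `Θ` (for every `i` and
every measurable `B`) iff for `P_Θ`-almost all `θ` one has `(P_θ)∘X_i⁻¹ = k_i(·,θ)`
for all `i`. -/
theorem condDistrib_family_via_disintegration
    {Ω Y Ψ I : Type*} [MeasurableSpace Ω] [mY : MeasurableSpace Y] [mΨ : MeasurableSpace Ψ]
    [MeasurableSpace.CountablyGenerated Y] [Countable I]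
    (P : Measure Ω) [IsProbabilityMeasure P]
    (Θ : Ω → Ψ) (hΘ : Measurable Θ)
    (Pd : Ψ → Measure Ω) (hPdprob : ∀ θ, IsProbabilityMeasure (Pd θ))
    (hPdmeas : ∀ D : Set Ω, MeasurableSet D → Measurable fun θ => Pd θ D)
    (hPdint : ∀ D : Set Ω, MeasurableSet D → ∫⁻ θ, Pd θ D ∂(P.map Θ) = P D)
    (hPdcons : ∀ D : Set Ψ, MeasurableSet D →
      ∀ᵐ θ ∂(P.map Θ).restrict D, Pd θ (Θ ⁻¹' D) = 1)
    (X : I → Ω → Y) (hX : ∀ i, Measurable (X i))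
    (k : I → Ψ → Measure Y) (hkprob : ∀ i θ, IsProbabilityMeasure (k i θ))
    (hkmeas : ∀ i, ∀ B : Set Y, MeasurableSet B → Measurable fun θ => k i θ B) :
    (∀ i, ∀ B : Set Y, MeasurableSet B →
        (fun ω => (k i (Θ ω) B).toReal)
          =ᵐ[P] P[(X i ⁻¹' B).indicator (fun _ => (1 : ℝ)) | MeasurableSpace.comap Θ mΨ]) ↔
      (∀ᵐ θ ∂(P.map Θ), ∀ i, (Pd θ).map (X i) = k i θ) := by
  set ν := P.map Θ with hν
  have hνprob : IsProbabilityMeasure ν := Measure.isProbabilityMeasure_map hΘ.aemeasurable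
  -- key bridging lemma
  have key : ∀ S : Set Ω, MeasurableSet S → ∀ D : Set Ψ, MeasurableSet D →
      ∫⁻ θ in D, Pd θ S ∂ν = P (S ∩ Θ ⁻¹' D) := by
    intro S hS D hD
    have hSD : MeasurableSet (S ∩ Θ ⁻¹' D) := hS.inter (hΘ hD)
    have h1 : ∫⁻ θ, Pd θ (S ∩ Θ ⁻¹' D) ∂ν = P (S ∩ Θ ⁻¹' D) := hPdint _ hSD
    have hmeas : Measurable fun θ => Pd θ (S ∩ Θ ⁻¹' D) := hPdmeas _ hSD
    have hDc : ∫⁻ θ in Dᶜ, Pd θ (S ∩ Θ ⁻¹' D) ∂ν = 0 := by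
      rw [lintegral_eq_zero_iff' hmeas.aemeasurable.restrict]
      filter_upwards [hPdcons Dᶜ hD.compl] with θ hθ
      have := hPdprob θ
      have h2 : Pd θ (Θ ⁻¹' D) = 0 := by
        have h3 : Pd θ ((Θ ⁻¹' Dᶜ)ᶜ) = 0 := by
          rw [measure_compl (hΘ hD.compl) (measure_ne_top _ _), hθ, measure_univ]
          simp
        simpa [preimage_compl, compl_compl] using h3
      exact measure_mono_null inter_subset_right h2
    have hD1 : ∫⁻ θ in D, Pd θ (S ∩ Θ ⁻¹' D) ∂ν = ∫⁻ θ in D, Pd θ S ∂ν := by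
      refine lintegral_congr_ae ?_
      filter_upwards [hPdcons D hD] with θ hθ
      have := hPdprob θ
      refine measure_inter_conull ?_
      rw [measure_compl (hΘ hD) (measure_ne_top _ _), hθ, measure_univ]
      simp
    calc ∫⁻ θ in D, Pd θ S ∂ν = ∫⁻ θ in D, Pd θ (S ∩ Θ ⁻¹' D) ∂ν := hD1.symm
      _ = ∫⁻ θ in D, Pd θ (S ∩ Θ ⁻¹' D) ∂ν + ∫⁻ θ in Dᶜ, Pd θ (S ∩ Θ ⁻¹' D) ∂ν := by
          rw [hDc, add_zero]
      _ = ∫⁻ θ, Pd θ (S ∩ Θ ⁻¹' D) ∂ν := lintegral_add_compl _ hD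
      _ = P (S ∩ Θ ⁻¹' D) := h1
  -- finiteness of set lintegrals of bounded functions
  have hfin : ∀ (f : Ψ → ℝ≥0∞), (∀ θ, f θ ≤ 1) → ∀ D : Set Ψ, ∫⁻ θ in D, f θ ∂ν ≠ ⊤ := by
    intro f hf1 D
    refine ne_top_of_le_ne_top ?_ (lintegral_mono hf1)
    rw [lintegral_one]
    exact measure_ne_top _ _
  -- conversion between real set integrals over Ω and lintegrals over Ψ
  have hconv : ∀ (f : Ψ → ℝ≥0∞), Measurable f → (∀ θ, f θ ≤ 1) → ∀ D : Set Ψ, MeasurableSet D →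
      ∫ ω in Θ ⁻¹' D, (f (Θ ω)).toReal ∂P = (∫⁻ θ in D, f θ ∂ν).toReal := by
    intro f hf hf1 D hD
    have e1 : (∫⁻ θ in D, f θ ∂ν).toReal = ∫ θ in D, (f θ).toReal ∂ν :=
      (integral_toReal hf.aemeasurable.restrict
        (ae_of_all _ fun θ => lt_of_le_of_lt (hf1 θ) ENNReal.one_lt_top)).symm
    have e2 : ∫ θ in D, (f θ).toReal ∂ν = ∫ ω in Θ ⁻¹' D, (f (Θ ω)).toReal ∂P := by
      rw [hν, Measure.restrict_map hΘ hD]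
      exact integral_map hΘ.aemeasurable.restrict
        (ENNReal.measurable_toReal.comp hf).aestronglyMeasurable
    rw [e1]
    exact e2.symm
  -- the countable generating π-system
  obtain ⟨S0, hS0c, hS0gen⟩ : ∃ b : Set (Set Y), b.Countable ∧ mY = .generateFrom b :=
    MeasurableSpace.CountablyGenerated.isCountablyGenerated
  set S := generatePiSystem S0 with hS
  have hSc : S.Countable := my_countable_generatePiSystem hS0c
  have hSpi : IsPiSystem S := isPiSystem_generatePiSystem S0
  have hSgen : mY = MeasurableSpace.generateFrom S := by
    rw [hS, generateFrom_generatePiSystem_eq, ← hS0gen]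
  have hSmeas : ∀ B ∈ S, MeasurableSet B := fun B hB =>
    hSgen ▸ MeasurableSpace.measurableSet_generateFrom hB
  have hindint : ∀ i (B : Set Y), MeasurableSet B →
      Integrable ((X i ⁻¹' B).indicator fun _ => (1:ℝ)) P := fun i B hB =>
    (integrable_const 1).indicator ((hX i) hB)
  have hindeq : ∀ i (B : Set Y), MeasurableSet B → ∀ D : Set Ψ, MeasurableSet D →
      ∫ ω in Θ ⁻¹' D, ((X i ⁻¹' B).indicator fun _ => (1:ℝ)) ω ∂P
        = (P (X i ⁻¹' B ∩ Θ ⁻¹' D)).toReal := by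
    intro i B hB D hD
    rw [setIntegral_indicator ((hX i) hB), setIntegral_const, inter_comm]
    simp
    rfl
  constructor
  · intro h
    have hae : ∀ i, ∀ B : Set Y, MeasurableSet B →
        ∀ᵐ θ ∂ν, Pd θ (X i ⁻¹' B) = k i θ B := by
      intro i B hB
      refine ae_eq_of_forall_setLIntegral_eq_of_sigmaFinite₀
        (hPdmeas _ ((hX i) hB)).aemeasurable (hkmeas i B hB).aemeasurable ?_
      intro D hD _
      rw [key _ ((hX i) hB) D hD]
      have h1 := h i B hB
      have h2 : ∫ ω in Θ ⁻¹' D, (k i (Θ ω) B).toReal ∂P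
          = ∫ ω in Θ ⁻¹' D, ((X i ⁻¹' B).indicator fun _ => (1:ℝ)) ω ∂P := by
        rw [setIntegral_congr_ae (hΘ hD) (h1.mono fun ω hω _ => hω),
          setIntegral_condExp hΘ.comap_le (hindint i B hB) ⟨D, hD, rfl⟩]
      rw [hconv _ (hkmeas i B hB) (fun θ => prob_le_one) D hD,
        hindeq i B hB D hD] at h2
      exact (ENNReal.toReal_eq_toReal_iff' (measure_ne_top _ _)
        (hfin _ (fun θ => prob_le_one) D)).mp h2.symm
    rw [ae_all_iff]
    intro i
    have hae2 : ∀ᵐ θ ∂ν, ∀ B ∈ S, Pd θ (X i ⁻¹' B) = k i θ B :=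
      (ae_ball_iff hSc).2 fun B hB => hae i B (hSmeas B hB)
    filter_upwards [hae2] with θ hθ
    have := hPdprob θ
    have := hkprob i θ
    have hmapprob : IsProbabilityMeasure ((Pd θ).map (X i)) :=
      Measure.isProbabilityMeasure_map (hX i).aemeasurable
    refine ext_of_generate_finite S hSgen hSpi (fun B hB => ?_) (by simp)
    rw [Measure.map_apply (hX i) (hSmeas B hB)]
    exact hθ B hB
  · intro h i B hB
    have hae : ∀ᵐ θ ∂ν, k i θ B = Pd θ (X i ⁻¹' B) := by
      filter_upwards [h] with θ hθ
      rw [← hθ i, Measure.map_apply (hX i) hB]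
    have hgmeas : Measurable fun ω => (k i (Θ ω) B).toReal :=
      ENNReal.measurable_toReal.comp ((hkmeas i B hB).comp hΘ)
    have hgcomap : Measurable[mΨ.comap Θ] fun ω => (k i (Θ ω) B).toReal :=
      ENNReal.measurable_toReal.comp ((hkmeas i B hB).comp (Measurable.of_comap_le le_rfl))
    have hg_le : ∀ ω, ‖(k i (Θ ω) B).toReal‖ ≤ 1 := by
      intro ω
      rw [Real.norm_eq_abs, abs_of_nonneg ENNReal.toReal_nonneg]
      simpa using ENNReal.toReal_mono ENNReal.one_ne_top
        (prob_le_one (μ := k i (Θ ω)) (s := B))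
    have hg_int : Integrable (fun ω => (k i (Θ ω) B).toReal) P :=
      (integrable_const (1:ℝ)).mono' hgmeas.aestronglyMeasurable (ae_of_all _ hg_le)
    refine ae_eq_condExp_of_forall_setIntegral_eq hΘ.comap_le (hindint i B hB)
      (fun s _ _ => hg_int.integrableOn) ?_
      hgcomap.stronglyMeasurable.aestronglyMeasurable
    rintro s ⟨D, hD, rfl⟩ -
    rw [hconv _ (hkmeas i B hB) (fun θ => prob_le_one) D hD, hindeq i B hB D hD]
    congr 1
    rw [← key _ ((hX i) hB) D hD]
    exact lintegral_congr_ae (ae_restrict_of_ae hae)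
end

section
/- Let Θ : Ω → Ψ be measurable and {P_θ}_{θ∈Ψ} a disintegration of P over P_Θ consistent with Θ. Let (W_n)_{n∈ℕ} be a sequence of real random variables on Ω and (K(θ))_{θ∈Ψ} a family of probability distributions on the Borel σ-algebra of ℝ given by a Markov kernel. Then (W_n) is P-conditionally independent given Θ with P(W_n ∈ B | σ(Θ)) = K(Θ)(B) a.s. for all n and B, if and only if for P_Θ-almost all θ the sequence (W_n) is independent under P_θ with each W_n distributed as K(θ) under P_θ. -/
open MeasureTheory Set ProbabilityTheory
open scoped ENNReal

section Aux
variable {Ω Ψ : Type*} [MeasurableSpace Ω] [mΨ : MeasurableSpace Ψ]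
  {P : Measure Ω} [IsProbabilityMeasure P]
  {Θ : Ω → Ψ}
  {Pd : Ψ → Measure Ω}

theorem disint_lintegral (hΘ : Measurable Θ) (hPdprob : ∀ θ, IsProbabilityMeasure (Pd θ))
    (hPdint : ∀ D : Set Ω, MeasurableSet D → ∫⁻ θ, Pd θ D ∂(P.map Θ) = P D)
    (hPdcons : ∀ D : Set Ψ, MeasurableSet D →
      ∀ᵐ θ ∂(P.map Θ).restrict D, Pd θ (Θ ⁻¹' D) = 1)
    {D : Set Ω} (hD : MeasurableSet D) {S : Set Ψ} (hS : MeasurableSet S) :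
    ∫⁻ θ in S, Pd θ D ∂(P.map Θ) = P (D ∩ Θ ⁻¹' S) := by
  set μ := P.map Θ with hμ
  have hDS : MeasurableSet (D ∩ Θ ⁻¹' S) := hD.inter (hΘ hS)
  have h1 : ∀ᵐ θ ∂μ.restrict S, Pd θ D = Pd θ (D ∩ Θ ⁻¹' S) := by
    filter_upwards [hPdcons S hS] with θ hθ
    have hc : Pd θ (Θ ⁻¹' S)ᶜ = 0 := by
      have := hPdprob θ
      exact (prob_compl_eq_zero_iff (hΘ hS)).2 hθ
    exact (measure_inter_conull hc).symm
  have h2 : ∀ᵐ θ ∂μ.restrict Sᶜ, Pd θ (D ∩ Θ ⁻¹' S) = 0 := by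
    filter_upwards [hPdcons Sᶜ hS.compl] with θ hθ
    have hc : Pd θ (Θ ⁻¹' S) = 0 := by
      have := hPdprob θ
      have h0 : Pd θ (Θ ⁻¹' S)ᶜᶜ = 0 := by
        rw [compl_compl]
        have := (prob_compl_eq_zero_iff (μ := Pd θ) (hΘ hS).compl).2 (by
          rwa [preimage_compl] at hθ)
        rwa [compl_compl] at this
      simpa using h0
    exact measure_mono_null inter_subset_right hc
  calc ∫⁻ θ in S, Pd θ D ∂μ = ∫⁻ θ in S, Pd θ (D ∩ Θ ⁻¹' S) ∂μ := lintegral_congr_ae h1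
    _ = ∫⁻ θ in S, Pd θ (D ∩ Θ ⁻¹' S) ∂μ + ∫⁻ θ in Sᶜ, Pd θ (D ∩ Θ ⁻¹' S) ∂μ := by
        rw [(lintegral_congr_ae h2).trans lintegral_zero, add_zero]
    _ = ∫⁻ θ, Pd θ (D ∩ Θ ⁻¹' S) ∂μ := lintegral_add_compl _ hS
    _ = P (D ∩ Θ ⁻¹' S) := hPdint _ hDS

theorem disint_condexp (hΘ : Measurable Θ) (hPdprob : ∀ θ, IsProbabilityMeasure (Pd θ))
    (hPdmeas : ∀ D : Set Ω, MeasurableSet D → Measurable fun θ => Pd θ D)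
    (hPdint : ∀ D : Set Ω, MeasurableSet D → ∫⁻ θ, Pd θ D ∂(P.map Θ) = P D)
    (hPdcons : ∀ D : Set Ψ, MeasurableSet D →
      ∀ᵐ θ ∂(P.map Θ).restrict D, Pd θ (Θ ⁻¹' D) = 1)
    {D : Set Ω} (hD : MeasurableSet D) :
    (fun ω => (Pd (Θ ω) D).toReal)
      =ᵐ[P] P[D.indicator (fun _ => (1 : ℝ)) | MeasurableSpace.comap Θ mΨ] := by
  have hmeasg : Measurable fun θ => (Pd θ D).toReal := (hPdmeas D hD).ennreal_toReal
  have hgle : ∀ θ, (Pd θ D).toReal ≤ 1 := fun θ => by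
    have := hPdprob θ
    simpa using ENNReal.toReal_mono ENNReal.one_ne_top (prob_le_one (μ := Pd θ) (s := D))
  have hgint : Integrable (fun ω => (Pd (Θ ω) D).toReal) P := by
    refine (integrable_const (1 : ℝ)).mono' ((hmeasg.comp hΘ).aestronglyMeasurable) ?_
    refine Filter.Eventually.of_forall fun ω => ?_
    rw [Real.norm_eq_abs, abs_of_nonneg ENNReal.toReal_nonneg]
    exact hgle _
  refine ae_eq_condExp_of_forall_setIntegral_eq hΘ.comap_le
    ((integrable_const (1 : ℝ)).indicator hD) (fun s _ _ => hgint.integrableOn)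
    (fun s hs _ => ?_) ?_
  · obtain ⟨S, hS, rfl⟩ := hs
    have hmap : ∫ ω in Θ ⁻¹' S, (Pd (Θ ω) D).toReal ∂P
        = ∫ θ in S, (Pd θ D).toReal ∂(P.map Θ) := by
      rw [setIntegral_map hS hmeasg.aestronglyMeasurable hΘ.aemeasurable]
    have hlt : ∀ᵐ θ ∂(P.map Θ).restrict S, Pd θ D < ∞ := by
      refine Filter.Eventually.of_forall fun θ => ?_
      have := hPdprob θ
      exact measure_lt_top _ _
    rw [hmap, integral_toReal ((hPdmeas D hD).aemeasurable.restrict) hlt,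
      disint_lintegral hΘ hPdprob hPdint hPdcons hD hS,
      setIntegral_indicator hD, setIntegral_const, smul_eq_mul, mul_one, inter_comm, measureReal_def]
  · have hm : Measurable[MeasurableSpace.comap Θ mΨ] fun ω => (Pd (Θ ω) D).toReal :=
      hmeasg.comp (Measurable.of_comap_le le_rfl)
    exact hm.stronglyMeasurable.aestronglyMeasurable

end Aux

/-- Conditional independence of a family of measurable maps over a σ-algebra `F`. -/
def CondIndepFam {Ω Y I : Type*} [MeasurableSpace Ω] (mY : MeasurableSpace Y)
    (P : Measure Ω) (F : MeasurableSpace Ω) (X : I → Ω → Y) : Prop :=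
  ∀ (n : ℕ) (idx : Fin n → I), Function.Injective idx →
    ∀ E : Fin n → Set Ω,
      (∀ j, MeasurableSet[MeasurableSpace.comap (X (idx j)) mY] (E j)) →
      P[Set.indicator (⋂ j, E j) (fun _ => (1 : ℝ)) | F]
        =ᵐ[P] fun ω => ∏ j, (P[Set.indicator (E j) (fun _ => (1 : ℝ)) | F]) ω

/-- (Characterization of mixed renewal processes via disintegrations.)
The interarrival sequence `(W_n)` is `P`-conditionally independent given `Θ` with
conditional distribution `K(Θ)` iff for `P_Θ`-almost all `θ` the sequence is
independent under `P_θ` with each `W_n` distributed as `K(θ)`. -/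
theorem mixedRenewal_iff_ae_renewal
    {Ω Ψ : Type*} [MeasurableSpace Ω] [mΨ : MeasurableSpace Ψ]
    (P : Measure Ω) [IsProbabilityMeasure P]
    (Θ : Ω → Ψ) (hΘ : Measurable Θ)
    (Pd : Ψ → Measure Ω) (hPdprob : ∀ θ, IsProbabilityMeasure (Pd θ))
    (hPdmeas : ∀ D : Set Ω, MeasurableSet D → Measurable fun θ => Pd θ D)
    (hPdint : ∀ D : Set Ω, MeasurableSet D → ∫⁻ θ, Pd θ D ∂(P.map Θ) = P D)
    (hPdcons : ∀ D : Set Ψ, MeasurableSet D →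
      ∀ᵐ θ ∂(P.map Θ).restrict D, Pd θ (Θ ⁻¹' D) = 1)
    (W : ℕ → Ω → ℝ) (hW : ∀ n, Measurable (W n))
    (K : Ψ → Measure ℝ) (hKprob : ∀ θ, IsProbabilityMeasure (K θ))
    (hKmeas : ∀ B : Set ℝ, MeasurableSet B → Measurable fun θ => K θ B) :
    (CondIndepFam (inferInstance : MeasurableSpace ℝ) P (MeasurableSpace.comap Θ mΨ) W ∧
        ∀ (n : ℕ) (B : Set ℝ), MeasurableSet B →
          (fun ω => (K (Θ ω) B).toReal)
            =ᵐ[P] P[(W n ⁻¹' B).indicator (fun _ => (1 : ℝ)) | MeasurableSpace.comap Θ mΨ]) ↔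
      (∀ᵐ θ ∂(P.map Θ),
        ProbabilityTheory.iIndepFun W (Pd θ) ∧
          ∀ n : ℕ, (Pd θ).map (W n) = K θ) := by
  classical
  have hce : ∀ {D : Set Ω}, MeasurableSet D →
      (fun ω => (Pd (Θ ω) D).toReal)
        =ᵐ[P] P[D.indicator (fun _ => (1 : ℝ)) | MeasurableSpace.comap Θ mΨ] :=
    fun hD => disint_condexp hΘ hPdprob hPdmeas hPdint hPdcons hD
  have hPdne : ∀ (θ : Ψ) (D : Set Ω), Pd θ D ≠ ∞ := fun θ D => by
    have := hPdprob θ; exact (measure_lt_top _ _).ne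
  have hKne : ∀ (θ : Ψ) (B : Set ℝ), K θ B ≠ ∞ := fun θ B => by
    have := hKprob θ; exact (measure_lt_top _ _).ne
  constructor
  · rintro ⟨hCI, hCD⟩
    -- Step 1: pointwise-in-(n,q) a.e. identification of one-dimensional distributions
    have hstep1 : ∀ (n : ℕ) (q : ℚ), ∀ᵐ θ ∂(P.map Θ),
        Pd θ (W n ⁻¹' Iio (q : ℝ)) = K θ (Iio (q : ℝ)) := by
      intro n q
      have hB : MeasurableSet (Iio (q : ℝ)) := measurableSet_Iio
      have hDm : MeasurableSet (W n ⁻¹' Iio (q : ℝ)) := (hW n) hB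
      have h3 : (fun ω => (Pd (Θ ω) (W n ⁻¹' Iio (q : ℝ))).toReal)
          =ᵐ[P] fun ω => (K (Θ ω) (Iio (q : ℝ))).toReal :=
        (hce hDm).trans (hCD n _ hB).symm
      have hset : MeasurableSet
          {θ | (Pd θ (W n ⁻¹' Iio (q : ℝ))).toReal = (K θ (Iio (q : ℝ))).toReal} :=
        measurableSet_eq_fun (hPdmeas _ hDm).ennreal_toReal (hKmeas _ hB).ennreal_toReal
      have h4 := (ae_map_iff hΘ.aemeasurable hset).2 h3
      filter_upwards [h4] with θ hθ
      exact (ENNReal.toReal_eq_toReal_iff' (hPdne _ _) (hKne _ _)).1 hθ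
    have hstep2 : ∀ᵐ θ ∂(P.map Θ), ∀ (n : ℕ) (q : ℚ),
        Pd θ (W n ⁻¹' Iio (q : ℝ)) = K θ (Iio (q : ℝ)) := by
      rw [ae_all_iff]; intro n; rw [ae_all_iff]; exact hstep1 n
    -- Step 3: finite-dimensional independence relations, one (S, q) at a time
    have hstep3 : ∀ (S : Finset ℕ) (q : {x // x ∈ S} → ℚ), ∀ᵐ θ ∂(P.map Θ),
        Pd θ (⋂ i : {x // x ∈ S}, W (i : ℕ) ⁻¹' Iio ((q i : ℚ) : ℝ))
          = ∏ i : {x // x ∈ S}, Pd θ (W (i : ℕ) ⁻¹' Iio ((q i : ℚ) : ℝ)) := by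
      intro S q
      set e := S.orderIsoOfFin rfl with he
      set f : {x // x ∈ S} → Set Ω := fun i => W (i : ℕ) ⁻¹' Iio ((q i : ℚ) : ℝ) with hf
      set E : Fin S.card → Set Ω := fun j => f (e j) with hE
      have hidx : Function.Injective fun j : Fin S.card => ((e j : {x // x ∈ S}) : ℕ) :=
        fun a b hab => e.injective (Subtype.ext hab)
      have hEcm : ∀ j, MeasurableSet[MeasurableSpace.comap
          (W ((e j : {x // x ∈ S}) : ℕ)) (inferInstance : MeasurableSpace ℝ)] (E j) :=
        fun j => ⟨Iio ((q (e j) : ℚ) : ℝ), measurableSet_Iio, rfl⟩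
      have hCIa := hCI S.card _ hidx E hEcm
      have hEm : ∀ j, MeasurableSet (E j) := fun j => (hW _) measurableSet_Iio
      have hIm : MeasurableSet (⋂ j, E j) := MeasurableSet.iInter hEm
      have h1 := hce hIm
      have h2 : ∀ᵐ ω ∂P, ∀ j, (Pd (Θ ω) (E j)).toReal
          = (P[(E j).indicator (fun _ => (1 : ℝ)) | MeasurableSpace.comap Θ mΨ]) ω :=
        ae_all_iff.2 fun j => hce (hEm j)
      have h3 : ∀ᵐ ω ∂P, (Pd (Θ ω) (⋂ j, E j)).toReal = ∏ j, (Pd (Θ ω) (E j)).toReal := by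
        filter_upwards [h1, h2, hCIa] with ω ha hb hc
        rw [ha, hc]
        exact Finset.prod_congr rfl fun j _ => (hb j).symm
      have hset : MeasurableSet
          {θ | (Pd θ (⋂ j, E j)).toReal = ∏ j, (Pd θ (E j)).toReal} := by
        refine measurableSet_eq_fun (hPdmeas _ hIm).ennreal_toReal ?_
        exact Finset.measurable_prod _ fun j _ => (hPdmeas _ (hEm j)).ennreal_toReal
      have h4 := (ae_map_iff hΘ.aemeasurable hset).2 h3
      filter_upwards [h4] with θ hθ
      have hprod_ne : (∏ j, Pd θ (E j)) ≠ ∞ :=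
        (ENNReal.prod_lt_top fun j _ => (hPdne θ _).lt_top).ne
      have hmain : Pd θ (⋂ j, E j) = ∏ j, Pd θ (E j) := by
        refine (ENNReal.toReal_eq_toReal_iff' (hPdne _ _) hprod_ne).1 ?_
        rw [ENNReal.toReal_prod]; exact hθ
      have hiI : (⋂ j, E j) = ⋂ i : {x // x ∈ S}, f i := by
        apply Set.ext; intro x
        simp only [Set.mem_iInter]
        constructor
        · intro hx i
          have := hx (e.symm i)
          simpa only [hE, OrderIso.apply_symm_apply] using this
        · intro hx j
          exact hx (e j)
      have hprod : (∏ j, Pd θ (E j)) = ∏ i : {x // x ∈ S}, Pd θ (f i) :=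
        Equiv.prod_comp e.toEquiv fun i => Pd θ (f i)
      rw [← hiI, ← hprod]; exact hmain
    have hstep4 : ∀ᵐ θ ∂(P.map Θ), ∀ p : Σ S : Finset ℕ, {x // x ∈ S} → ℚ,
        Pd θ (⋂ i : {x // x ∈ p.1}, W (i : ℕ) ⁻¹' Iio ((p.2 i : ℚ) : ℝ))
          = ∏ i : {x // x ∈ p.1}, Pd θ (W (i : ℕ) ⁻¹' Iio ((p.2 i : ℚ) : ℝ)) := by
      rw [ae_all_iff]
      rintro ⟨S, q⟩
      exact hstep3 S q
    filter_upwards [hstep2, hstep4] with θ h2 h4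
    have hθprob := hPdprob θ
    constructor
    · -- independence under Pd θ
      rw [iIndepFun_iff_iIndep]
      refine iIndepSets.iIndep (fun i => (hW i).comap_le)
        (fun i => {t | ∃ q : ℚ, t = W i ⁻¹' Iio ((q : ℚ) : ℝ)}) ?_ ?_ ?_
      · intro i t1 ht1 t2 ht2 _
        obtain ⟨q1, rfl⟩ := ht1
        obtain ⟨q2, rfl⟩ := ht2
        exact ⟨min q1 q2, by rw [← preimage_inter, Iio_inter_Iio, Rat.cast_min]⟩
      · intro i
        conv_lhs => rw [show (Real.measurableSpace : MeasurableSpace ℝ)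
          = MeasurableSpace.generateFrom (⋃ a : ℚ, {Iio (a : ℝ)}) from
            (BorelSpace.measurable_eq (α := ℝ)).trans Real.borel_eq_generateFrom_Iio_rat]
        rw [MeasurableSpace.comap_generateFrom]
        congr 1
        ext t
        simp only [Set.mem_image, Set.mem_iUnion, Set.mem_singleton_iff, Set.mem_setOf_eq]
        constructor
        · rintro ⟨u, ⟨a, rfl⟩, rfl⟩; exact ⟨a, rfl⟩
        · rintro ⟨a, rfl⟩; exact ⟨Iio ((a : ℚ) : ℝ), ⟨a, rfl⟩, rfl⟩
      · rw [iIndepSets_iff]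
        intro s g hg
        have hq : ∀ i : {x // x ∈ s}, ∃ q : ℚ, g (i : ℕ) = W (i : ℕ) ⁻¹' Iio ((q : ℚ) : ℝ) :=
          fun i => hg (i : ℕ) i.2
        choose q hqspec using hq
        have key := h4 ⟨s, q⟩
        calc Pd θ (⋂ i ∈ s, g i)
            = Pd θ (⋂ i : {x // x ∈ s}, W (i : ℕ) ⁻¹' Iio ((q i : ℚ) : ℝ)) := by
              congr 1
              apply Set.ext; intro x
              simp only [Set.mem_iInter]
              constructor
              · intro hx i
                rw [← hqspec i]
                exact hx (i : ℕ) i.2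
              · intro hx i hi
                have := hx ⟨i, hi⟩
                rwa [← hqspec ⟨i, hi⟩] at this
          _ = ∏ i : {x // x ∈ s}, Pd θ (W (i : ℕ) ⁻¹' Iio ((q i : ℚ) : ℝ)) := key
          _ = ∏ i ∈ s, Pd θ (g i) := by
              rw [← Finset.prod_attach s fun i => Pd θ (g i), ← Finset.univ_eq_attach]
              exact Finset.prod_congr rfl fun i _ => by rw [hqspec i]
    · -- identification of one-dimensional distributions
      intro n
      haveI : IsProbabilityMeasure ((Pd θ).map (W n)) :=
        Measure.isProbabilityMeasure_map (hW n).aemeasurable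
      haveI := hKprob θ
      refine ext_of_generate_finite _
        ((BorelSpace.measurable_eq (α := ℝ)).trans Real.borel_eq_generateFrom_Iio_rat)
        Real.isPiSystem_Iio_rat ?_ ?_
      · intro t ht
        simp only [Set.mem_iUnion, Set.mem_singleton_iff] at ht
        obtain ⟨a, rfl⟩ := ht
        rw [Measure.map_apply (hW n) measurableSet_Iio]
        exact h2 n a
      · simp [measure_univ]
  · intro h
    constructor
    · intro n idx hinj E hE
      have hB : ∀ j, ∃ B : Set ℝ, MeasurableSet B ∧ W (idx j) ⁻¹' B = E j :=
        fun j => MeasurableSpace.measurableSet_comap.1 (hE j)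
      choose B hBm hBeq using hB
      have hEm : ∀ j, MeasurableSet (E j) := fun j => hBeq j ▸ (hW _) (hBm j)
      have hIm : MeasurableSet (⋂ j, E j) := MeasurableSet.iInter hEm
      have hae : ∀ᵐ θ ∂(P.map Θ), Pd θ (⋂ j, E j) = ∏ j, Pd θ (E j) := by
        filter_upwards [h] with θ hθ
        obtain ⟨hind, _⟩ := hθ
        set s : ℕ → Set Ω := fun i => if hex : ∃ j, idx j = i then E hex.choose else univ
          with hs
        have hs_idx : ∀ j, s (idx j) = E j := by
          intro j
          have hex : ∃ j', idx j' = idx j := ⟨j, rfl⟩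
          simp only [hs, dif_pos hex]
          exact congrArg E (hinj hex.choose_spec)
        have hsm : ∀ i ∈ Finset.image idx Finset.univ,
            MeasurableSet[MeasurableSpace.comap (W i) (inferInstance : MeasurableSpace ℝ)]
              (s i) := by
          intro i hi
          simp only [Finset.mem_image, Finset.mem_univ, true_and] at hi
          obtain ⟨j, rfl⟩ := hi
          rw [hs_idx j]
          exact hE j
        have hkey := hind.meas_biInter hsm
        calc Pd θ (⋂ j, E j) = Pd θ (⋂ i ∈ Finset.image idx Finset.univ, s i) := by
              congr 1
              apply Set.ext; intro x
              simp only [Set.mem_iInter, Finset.mem_image, Finset.mem_univ, true_and]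
              constructor
              · rintro hx i ⟨j, rfl⟩
                rw [hs_idx j]; exact hx j
              · intro hx j
                have := hx (idx j) ⟨j, rfl⟩
                rwa [hs_idx j] at this
          _ = ∏ i ∈ Finset.image idx Finset.univ, Pd θ (s i) := hkey
          _ = ∏ j, Pd θ (E j) := by
              rw [Finset.prod_image fun a _ b _ hab => hinj hab]
              exact Finset.prod_congr rfl fun j _ => by rw [hs_idx j]
      have hae' : ∀ᵐ ω ∂P, Pd (Θ ω) (⋂ j, E j) = ∏ j, Pd (Θ ω) (E j) :=
        ae_of_ae_map hΘ.aemeasurable hae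
      have h1 := hce hIm
      have h2 : ∀ᵐ ω ∂P, ∀ j, (Pd (Θ ω) (E j)).toReal
          = (P[(E j).indicator (fun _ => (1 : ℝ)) | MeasurableSpace.comap Θ mΨ]) ω :=
        ae_all_iff.2 fun j => hce (hEm j)
      filter_upwards [h1, h2, hae'] with ω ha hb hc
      rw [← ha, hc, ENNReal.toReal_prod]
      exact Finset.prod_congr rfl fun j _ => hb j
    · intro n Bs hBs
      have hae : ∀ᵐ θ ∂(P.map Θ), Pd θ (W n ⁻¹' Bs) = K θ Bs := by
        filter_upwards [h] with θ hθ
        obtain ⟨_, hmap⟩ := hθ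
        rw [← hmap n, Measure.map_apply (hW n) hBs]
      have hae' : ∀ᵐ ω ∂P, Pd (Θ ω) (W n ⁻¹' Bs) = K (Θ ω) Bs :=
        ae_of_ae_map hΘ.aemeasurable hae
      have h1 := hce ((hW n) hBs)
      filter_upwards [h1, hae'] with ω ha hb
      rw [← ha, hb]
end

section
/- Let Ω = ℝ^ℕ × (0,∞), and let P be the probability measure defined by P(E) = ∫₀^∞ (⊗_{n∈ℕ} Exp(nθ))(E^θ) · 2θe^{-2θ} dθ (mixing the product of exponential distributions with rates nθ over θ ~ Gamma(2,1)). Let W_n denote the n-th coordinate projection. Then for all w_1, w_2 ≥ 0, P(W_1 ≤ w_1, W_2 ≤ w_2) = w_2/(w_2+1) − 2[(w_1+2)⁻¹ − (w_1+2w_2+2)⁻¹]; in particular P(W_1 ≤ 2, W_2 ≤ 1) = 1/3 ≠ 2/7 = P(W_1 ≤ 1, W_2 ≤ 2), so the sequence (W_n) is not P-exchangeable. -/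
open MeasureTheory ProbabilityTheory Set

lemma exp_int' {c : ℝ} (hc : 0 < c) :
    ∫ θ in Ioi (0:ℝ), Real.exp (-(c * θ)) = c⁻¹ := by
  have h := integral_comp_mul_left_Ioi (fun x => Real.exp (-x)) 0 hc
  simp only [mul_zero] at h
  rw [h, integral_exp_neg_Ioi_zero, smul_eq_mul, mul_one]

lemma intOn' {c : ℝ} (hc : 0 < c) :
    IntegrableOn (fun θ => Real.exp (-(c * θ))) (Ioi (0:ℝ)) := by
  simpa [neg_mul] using exp_neg_integrableOn_Ioi 0 hc

lemma expMeasure_Iic' {r x : ℝ} (hr : 0 < r) (hx : 0 ≤ x) :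
    expMeasure r (Iic x) = ENNReal.ofReal (1 - Real.exp (-(r * x))) := by
  have : IsProbabilityMeasure (expMeasure r) := isProbabilityMeasure_expMeasure hr
  rw [← ofReal_cdf, cdf_expMeasure_eq hr, if_pos hx]

/-- On `Ω = ℝ^ℕ × (0,∞)`, let `P` mix the products of exponential
distributions `Exp((n+1)θ)` (so that the `n`-th interarrival time has rate `nθ`,
`n = 1, 2, …`) over `θ ∼ Gamma(2,1)` (density `2e^{-2θ}`).  Then
`P(W₁ ≤ w₁, W₂ ≤ w₂) = w₂/(w₂+1) − 2[(w₁+2)⁻¹ − (w₁+2w₂+2)⁻¹]`; in particular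
`P(W₁ ≤ 2, W₂ ≤ 1) = 1/3 ≠ 2/7 = P(W₁ ≤ 1, W₂ ≤ 2)`, hence `(W_n)` is not
`P`-exchangeable. -/
theorem nonExchangeable_mixedRenewal_example
    (ν : ℝ → Measure (ℕ → ℝ)) (hνprob : ∀ θ, IsProbabilityMeasure (ν θ))
    (hνcyl : ∀ θ : ℝ, 0 < θ → ∀ (s : Finset ℕ) (B : ℕ → Set ℝ),
      (∀ n, MeasurableSet (B n)) →
      ν θ {g : ℕ → ℝ | ∀ n ∈ s, g n ∈ B n}
        = ∏ n ∈ s, expMeasure (((n : ℝ) + 1) * θ) (B n))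
    (P : Measure ((ℕ → ℝ) × ℝ)) [IsProbabilityMeasure P]
    (hP : ∀ E : Set ((ℕ → ℝ) × ℝ), MeasurableSet E →
      P E = ∫⁻ θ in Set.Ioi (0 : ℝ),
        ν θ {ω : ℕ → ℝ | (ω, θ) ∈ E} * ENNReal.ofReal (2 * Real.exp (-2 * θ))) :
    (∀ w₁ w₂ : ℝ, 0 ≤ w₁ → 0 ≤ w₂ →
      P {p : (ℕ → ℝ) × ℝ | p.1 0 ≤ w₁ ∧ p.1 1 ≤ w₂}
        = ENNReal.ofReal (w₂ / (w₂ + 1) - 2 * ((w₁ + 2)⁻¹ - (w₁ + 2 * w₂ + 2)⁻¹))) ∧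
    P {p : (ℕ → ℝ) × ℝ | p.1 0 ≤ 2 ∧ p.1 1 ≤ 1} = 1 / 3 ∧
    P {p : (ℕ → ℝ) × ℝ | p.1 0 ≤ 1 ∧ p.1 1 ≤ 2} = 2 / 7 ∧
    ¬ (∀ a b : ℝ, P {p : (ℕ → ℝ) × ℝ | p.1 0 ≤ a ∧ p.1 1 ≤ b}
        = P {p : (ℕ → ℝ) × ℝ | p.1 0 ≤ b ∧ p.1 1 ≤ a}) := by
  have main : ∀ w₁ w₂ : ℝ, 0 ≤ w₁ → 0 ≤ w₂ →
      P {p : (ℕ → ℝ) × ℝ | p.1 0 ≤ w₁ ∧ p.1 1 ≤ w₂}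
        = ENNReal.ofReal (w₂ / (w₂ + 1) - 2 * ((w₁ + 2)⁻¹ - (w₁ + 2 * w₂ + 2)⁻¹)) := by
    intro a b ha hb
    have hmeas : MeasurableSet {p : (ℕ → ℝ) × ℝ | p.1 0 ≤ a ∧ p.1 1 ≤ b} :=
      (measurableSet_le ((measurable_pi_apply 0).comp measurable_fst) measurable_const).inter
        (measurableSet_le ((measurable_pi_apply 1).comp measurable_fst) measurable_const)
    -- the section measure under ν θ
    have hν : ∀ θ : ℝ, 0 < θ → ν θ {ω : ℕ → ℝ | ω 0 ≤ a ∧ ω 1 ≤ b}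
        = ENNReal.ofReal ((1 - Real.exp (-(θ * a))) * (1 - Real.exp (-(2 * θ * b)))) := by
      intro θ hθ
      have hB : ∀ n : ℕ, MeasurableSet ((fun n => if n = 0 then Iic a else Iic b) n) := by
        intro n; dsimp only; split <;> exact measurableSet_Iic
      have h := hνcyl θ hθ ({0, 1} : Finset ℕ) (fun n => if n = 0 then Iic a else Iic b) hB
      have hset : {g : ℕ → ℝ | ∀ n ∈ ({0, 1} : Finset ℕ),
          g n ∈ (fun n => if n = 0 then Iic a else Iic b) n}
          = {ω : ℕ → ℝ | ω 0 ≤ a ∧ ω 1 ≤ b} := by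
        ext g; simp [Finset.mem_insert]
      rw [hset] at h
      rw [h, Finset.prod_pair (by norm_num : (0:ℕ) ≠ 1)]
      simp only [if_pos rfl, if_neg (by norm_num : (1:ℕ) ≠ 0)]
      push_cast
      rw [zero_add, one_mul, expMeasure_Iic' hθ ha,
        expMeasure_Iic' (by linarith : (0:ℝ) < (1 + 1) * θ) hb,
        ← ENNReal.ofReal_mul (by
          have : Real.exp (-(θ * a)) ≤ 1 :=
            Real.exp_le_one_iff.mpr (by nlinarith)
          linarith)]
      congr 2
      ring_nf
    -- the mixing integral
    rw [hP _ hmeas]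
    have hcongr : ∫⁻ θ in Ioi (0:ℝ),
        ν θ {ω : ℕ → ℝ | (ω, θ) ∈ {p : (ℕ → ℝ) × ℝ | p.1 0 ≤ a ∧ p.1 1 ≤ b}}
          * ENNReal.ofReal (2 * Real.exp (-2 * θ))
        = ∫⁻ θ in Ioi (0:ℝ), ENNReal.ofReal
            ((1 - Real.exp (-(θ * a))) * (1 - Real.exp (-(2 * θ * b)))
              * (2 * Real.exp (-2 * θ))) := by
      refine setLIntegral_congr_fun_ae measurableSet_Ioi (ae_of_all _ fun θ hθ => ?_)
      have h1 : {ω : ℕ → ℝ | (ω, θ) ∈ {p : (ℕ → ℝ) × ℝ | p.1 0 ≤ a ∧ p.1 1 ≤ b}}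
          = {ω : ℕ → ℝ | ω 0 ≤ a ∧ ω 1 ≤ b} := rfl
      rw [h1, hν θ hθ, ← ENNReal.ofReal_mul]
      have h2 : Real.exp (-(θ * a)) ≤ 1 := Real.exp_le_one_iff.mpr (by nlinarith [(mem_Ioi.mp hθ).le])
      have h3 : Real.exp (-(2 * θ * b)) ≤ 1 := Real.exp_le_one_iff.mpr (by nlinarith [(mem_Ioi.mp hθ).le])
      nlinarith
    rw [hcongr]
    -- expand the integrand as a combination of exponentials
    set F : ℝ → ℝ := fun θ =>
      (1 - Real.exp (-(θ * a))) * (1 - Real.exp (-(2 * θ * b))) * (2 * Real.exp (-2 * θ))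
    have hFeq : F = fun θ => 2 * Real.exp (-(2 * θ)) - 2 * Real.exp (-((2 + a) * θ))
        - 2 * Real.exp (-((2 + 2 * b) * θ)) + 2 * Real.exp (-((2 + a + 2 * b) * θ)) := by
      funext θ
      have h1 : Real.exp (-((2 + a) * θ)) = Real.exp (-(θ * a)) * Real.exp (-(2 * θ)) := by
        rw [← Real.exp_add]; congr 1; ring
      have h2 : Real.exp (-((2 + 2 * b) * θ))
          = Real.exp (-(2 * θ * b)) * Real.exp (-(2 * θ)) := by
        rw [← Real.exp_add]; congr 1; ring
      have h3 : Real.exp (-((2 + a + 2 * b) * θ))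
          = Real.exp (-(θ * a)) * Real.exp (-(2 * θ * b)) * Real.exp (-(2 * θ)) := by
        rw [← Real.exp_add, ← Real.exp_add]; congr 1; ring
      have h4 : Real.exp (-2 * θ) = Real.exp (-(2 * θ)) := by norm_num
      simp only [F, h1, h2, h3, h4]; ring
    have hc1 : (0:ℝ) < 2 := by norm_num
    have hc2 : (0:ℝ) < 2 + a := by linarith
    have hc3 : (0:ℝ) < 2 + 2 * b := by linarith
    have hc4 : (0:ℝ) < 2 + a + 2 * b := by linarith
    have hFint : IntegrableOn F (Ioi (0:ℝ)) := by
      rw [hFeq]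
      exact ((((intOn' hc1).const_mul 2).sub ((intOn' hc2).const_mul 2)).sub
        ((intOn' hc3).const_mul 2)).add ((intOn' hc4).const_mul 2)
    have hFnn : 0 ≤ᵐ[volume.restrict (Ioi (0:ℝ))] F := by
      filter_upwards [ae_restrict_mem measurableSet_Ioi] with θ hθ
      have h2 : Real.exp (-(θ * a)) ≤ 1 :=
        Real.exp_le_one_iff.mpr (by nlinarith [le_of_lt (mem_Ioi.mp hθ)])
      have h3 : Real.exp (-(2 * θ * b)) ≤ 1 :=
        Real.exp_le_one_iff.mpr (by nlinarith [le_of_lt (mem_Ioi.mp hθ)])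
      simp only [F, Pi.zero_apply]
      exact mul_nonneg (mul_nonneg (by linarith) (by linarith)) (by positivity)
    rw [← MeasureTheory.ofReal_integral_eq_lintegral_ofReal hFint hFnn]
    congr 1
    have hIval : ∫ θ in Ioi (0:ℝ), F θ
        = 2 * (2:ℝ)⁻¹ - 2 * (2 + a)⁻¹ - 2 * (2 + 2 * b)⁻¹ + 2 * (2 + a + 2 * b)⁻¹ := by
      have h12 : Integrable (fun θ : ℝ => 2 * Real.exp (-(2 * θ))
          - 2 * Real.exp (-((2 + a) * θ))) (volume.restrict (Ioi 0)) :=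
        ((intOn' hc1).const_mul 2).sub ((intOn' hc2).const_mul 2)
      have h123 : Integrable (fun θ : ℝ => 2 * Real.exp (-(2 * θ))
          - 2 * Real.exp (-((2 + a) * θ)) - 2 * Real.exp (-((2 + 2 * b) * θ)))
          (volume.restrict (Ioi 0)) := h12.sub ((intOn' hc3).const_mul 2)
      rw [hFeq]
      beta_reduce
      rw [integral_add h123 ((intOn' hc4).const_mul 2),
        integral_sub h12 ((intOn' hc3).const_mul 2),
        integral_sub ((intOn' hc1).const_mul 2) ((intOn' hc2).const_mul 2),
        integral_const_mul, integral_const_mul, integral_const_mul, integral_const_mul,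
        exp_int' hc1, exp_int' hc2, exp_int' hc3, exp_int' hc4]
    rw [hIval]
    field_simp
    ring
  refine ⟨main, ?_, ?_, ?_⟩
  · rw [main 2 1 (by norm_num) (by norm_num)]
    rw [show (1 / (1 + 1) - 2 * (((2:ℝ) + 2)⁻¹ - (2 + 2 * 1 + 2)⁻¹)) = 1/3 by norm_num]
    rw [ENNReal.ofReal_div_of_pos (by norm_num), ENNReal.ofReal_one, ENNReal.ofReal_ofNat]
  · rw [main 1 2 (by norm_num) (by norm_num)]
    rw [show ((2:ℝ) / (2 + 1) - 2 * (((1:ℝ) + 2)⁻¹ - (1 + 2 * 2 + 2)⁻¹)) = 2/7 by norm_num]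
    rw [ENNReal.ofReal_div_of_pos (by norm_num), ENNReal.ofReal_ofNat, ENNReal.ofReal_ofNat]
  · intro h
    have h1 := h 2 1
    rw [main 2 1 (by norm_num) (by norm_num), main 1 2 (by norm_num) (by norm_num)] at h1
    rw [ENNReal.ofReal_eq_ofReal_iff (by norm_num) (by norm_num)] at h1
    norm_num at h1
end
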